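/- Let O be a discrete valuation ring with maximal ideal m, fraction field Q and residue field κ, let G be a group, and let ρ : G → GL_n(O) be a representation whose reduction modulo m, ρ̄ : G → GL_n(κ), is irreducible (i.e. κ^n has no G-stable subspace other than 0 and κ^n). Then the representation ρ ⊗_O Q : G → GL_n(Q) is irreducible. -/

import Mathlib

open scoped TensorProduct

/-- Entrywise application of a ring hom commutes with `mulVec`. -/
private lemma mulVec_map_comm {R S : Type*} [CommRing R] [CommRing S] {n : ℕ}
    (t : R →+* S) (A : Matrix (Fin n) (Fin n) R) (x : Fin n → R) :
    Matrix.mulVec (A.map t) (fun i => t (x i)) = fun i => t (A.mulVec x i) := by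
  funext i
  exact (RingHom.map_mulVec t A x i).symm

/-- Let `O` be a discrete valuation ring with maximal ideal `m`, fraction
field `Q` and residue field `κ`, and `ρ : G → GL_n(O)` a representation whose reduction
mod `m` is irreducible over `κ`.  Then `ρ ⊗_O Q` is irreducible. -/
theorem irreducible_of_residual_irreducible
    (O : Type*) [CommRing O] [IsDomain O] [IsDiscreteValuationRing O]
    (Q : Type*) [Field Q] [Algebra O Q] [IsFractionRing O Q]
    (G : Type*) [Group G] (n : ℕ)
    (ρ : G →* (Matrix (Fin n) (Fin n) O)ˣ)
    (hirr : ∀ W : Submodule (IsLocalRing.ResidueField O)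
        (Fin n → IsLocalRing.ResidueField O),
      (∀ g : G, ∀ x ∈ W,
        Matrix.mulVec ((ρ g : Matrix (Fin n) (Fin n) O).map (IsLocalRing.residue O)) x ∈ W) →
      W = ⊥ ∨ W = ⊤) :
    ∀ W : Submodule Q (Fin n → Q),
      (∀ g : G, ∀ x ∈ W,
        Matrix.mulVec ((ρ g : Matrix (Fin n) (Fin n) O).map (algebraMap O Q)) x ∈ W) →
      W = ⊥ ∨ W = ⊤ := by
  classical
  intro W hW
  set κ := IsLocalRing.ResidueField O with hκdef
  set r : O →+* κ := IsLocalRing.residue O with hrdef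
  set σ : O →+* Q := algebraMap O Q with hσdef
  have hσinj : Function.Injective σ := IsFractionRing.injective O Q
  -- the integral lattice `L = W ∩ O^n`
  let fl : (Fin n → O) →ₗ[O] (Fin n → Q) :=
    LinearMap.pi fun i => (Algebra.linearMap O Q).comp (LinearMap.proj i)
  let L : Submodule O (Fin n → O) := (W.restrictScalars O).comap fl
  have hmemL : ∀ x : Fin n → O, x ∈ L ↔ (fun i => σ (x i)) ∈ W := fun x => Iff.rfl
  -- stability of `L`
  have hLstab : ∀ g : G, ∀ x ∈ L, (ρ g : Matrix (Fin n) (Fin n) O).mulVec x ∈ L := by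
    intro g x hx
    rw [hmemL]
    rw [← mulVec_map_comm σ]
    exact hW g _ ((hmemL x).mp hx)
  -- the reduction map, `r`-semilinear
  have hrsurj : Function.Surjective r := Ideal.Quotient.mk_surjective
  haveI : RingHomSurjective r := ⟨hrsurj⟩
  let πₗ : (Fin n → O) →ₛₗ[r] (Fin n → κ) :=
    { toFun := fun x i => r (x i)
      map_add' := fun a b => by funext i; simp
      map_smul' := fun c x => by funext i; simp }
  let Wbar : Submodule κ (Fin n → κ) := L.map πₗ
  have hWbar_stab : ∀ g : G, ∀ x ∈ Wbar,
      Matrix.mulVec ((ρ g : Matrix (Fin n) (Fin n) O).map r) x ∈ Wbar := by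
    rintro g x hx
    obtain ⟨a, ha, rfl⟩ := Submodule.mem_map.mp hx
    refine Submodule.mem_map.mpr ⟨(ρ g : Matrix (Fin n) (Fin n) O).mulVec a, hLstab g a ha, ?_⟩
    exact (mulVec_map_comm r _ a).symm
  rcases hirr Wbar hWbar_stab with hbot | htop
  · -- residually zero ⇒ `W = ⊥`
    left
    rw [eq_bot_iff]
    intro w hw
    rw [Submodule.mem_bot]
    by_contra hw0
    obtain ⟨ϖ, hϖ⟩ := IsDiscreteValuationRing.exists_irreducible O
    have hσϖ : σ ϖ ≠ 0 := fun h => hϖ.ne_zero (hσinj (by simpa using h))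
    have key : ∀ N : ℕ, ∀ v : Fin n → O, v ∈ L → ∀ i, ¬ ϖ ^ N ∣ v i → False := by
      intro N
      induction N with
      | zero =>
        intro v _ i h
        exact h (by rw [pow_zero]; exact one_dvd _)
      | succ N ih =>
        intro v hv i hdvd
        by_cases hπv : (fun j => r (v j)) = (0 : Fin n → κ)
        · have hdv : ∀ j, ϖ ∣ v j := by
            intro j
            have h0 : r (v j) = 0 := congrFun hπv j
            have hm : v j ∈ IsLocalRing.maximalIdeal O :=
              Ideal.Quotient.eq_zero_iff_mem.mp h0
            rwa [hϖ.maximalIdeal_eq, Ideal.mem_span_singleton] at hm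
          choose u hu using hdv
          refine ih u ?_ i ?_
          · rw [hmemL]
            have heq : (fun j => σ (u j)) = (σ ϖ)⁻¹ • (fun j => σ (v j)) := by
              funext j
              rw [Pi.smul_apply, smul_eq_mul, hu j, map_mul]
              field_simp
            rw [heq]
            exact W.smul_mem _ ((hmemL v).mp hv)
          · intro hdvd'
            exact hdvd (by rw [hu i, pow_succ']; exact mul_dvd_mul_left ϖ hdvd')
        · have hmem : (fun j => r (v j)) ∈ Wbar := Submodule.mem_map.mpr ⟨v, hv, rfl⟩
          rw [hbot, Submodule.mem_bot] at hmem
          exact hπv hmem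
    -- clear denominators of `w`
    obtain ⟨b, hb⟩ :=
      IsLocalization.exist_integer_multiples_of_finite (nonZeroDivisors O) w
    choose v hv using fun i => hb i
    have hσb : σ (b : O) ≠ 0 := fun h =>
      nonZeroDivisors.coe_ne_zero b (hσinj (by simpa using h))
    have hvL : v ∈ L := by
      rw [hmemL]
      have heq : (fun i => σ (v i)) = σ (b : O) • w := by
        funext i
        rw [Pi.smul_apply, hv i, Algebra.smul_def]
        rfl
      rw [heq]
      exact W.smul_mem _ hw
    obtain ⟨i0, hi0⟩ : ∃ i, v i ≠ 0 := by
      by_contra h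
      push_neg at h
      apply hw0
      funext i
      have h0 : σ (b : O) * w i = 0 := by
        have := hv i
        rw [h i, map_zero, Algebra.smul_def] at this
        exact this.symm
      rcases mul_eq_zero.mp h0 with h' | h'
      · exact absurd h' hσb
      · exact h'
    obtain ⟨N, hN⟩ := FiniteMultiplicity.of_not_isUnit hϖ.not_isUnit hi0
    exact key (N + 1) v hvL i0 hN
  · -- residually everything ⇒ `W = ⊤` via Nakayama
    right
    have hle : (⊤ : Submodule O (Fin n → O)) ≤
        L ⊔ (IsLocalRing.maximalIdeal O) • (⊤ : Submodule O (Fin n → O)) := by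
      intro x _
      have hx : (fun j => r (x j)) ∈ Wbar := by rw [htop]; trivial
      obtain ⟨y, hy, hyx⟩ := Submodule.mem_map.mp hx
      have hxy : ∀ i, x i - y i ∈ IsLocalRing.maximalIdeal O := by
        intro i
        have h1 : r (y i) = r (x i) := congrFun hyx i
        have : r (x i - y i) = 0 := by rw [map_sub, h1, sub_self]
        exact Ideal.Quotient.eq_zero_iff_mem.mp this
      have hsub : x - y ∈
          (IsLocalRing.maximalIdeal O) • (⊤ : Submodule O (Fin n → O)) := by
        have hrepr : x - y = ∑ i, ((x - y) i) • fun j => if i = j then (1 : O) else 0 :=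
          pi_eq_sum_univ (x - y)
        rw [hrepr]
        exact Submodule.sum_mem _ fun i _ =>
          Submodule.smul_mem_smul (by simpa using hxy i) trivial
      have hdecomp : x = y + (x - y) := by abel
      rw [hdecomp]
      exact Submodule.add_mem _ (Submodule.mem_sup_left hy) (Submodule.mem_sup_right hsub)
    have hfg : (⊤ : Submodule O (Fin n → O)).FG := Module.finite_def.mp inferInstance
    have hjac : IsLocalRing.maximalIdeal O ≤ Ideal.jacobson ⊥ :=
      IsLocalRing.maximalIdeal_le_jacobson ⊥
    have hLtop : (⊤ : Submodule O (Fin n → O)) ≤ L :=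
      Submodule.le_of_le_smul_of_le_jacobson_bot hfg hjac hle
    rw [eq_top_iff]
    intro w _
    have hb : ∀ i : Fin n, (fun j => if i = j then (1 : Q) else 0) ∈ W := by
      intro i
      have hmem : (fun j : Fin n => if i = j then (1 : O) else 0) ∈ L :=
        hLtop Submodule.mem_top
      rw [hmemL] at hmem
      have : (fun j => σ (if i = j then (1 : O) else 0)) =
          (fun j => if i = j then (1 : Q) else 0) := by
        funext j; by_cases h : i = j <;> simp [h]
      rwa [this] at hmem
    have hrepr : w = ∑ i, w i • fun j => if i = j then (1 : Q) else 0 := pi_eq_sum_univ w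
    rw [hrepr]
    exact Submodule.sum_mem _ fun i _ => W.smul_mem _ (hb i)
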